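/- For every integer k ≥ 3, π = k·tan(π/k)·(1 − 2·S_k), where S_k = ∑_{n=1}^∞ 1/((k·n)² − 1). -/

import Mathlib

open Real



private lemma int_exp_aux (c : ℝ) (hc : c ≠ 0) :
    ∫ x in (-π : ℝ)..π, Complex.exp (Complex.I * c * x) =
      2 * Real.sin (c * π) / c := by
  have hc' : Complex.I * c ≠ 0 := by
    simp [Complex.ext_iff, hc]
  rw [show (fun x : ℝ => Complex.exp (Complex.I * c * x)) = fun x : ℝ =>
    Complex.exp ((Complex.I * c) * x) from rfl, integral_exp_mul_complex hc']
  have h1 : Complex.I * c * π = ((c * π : ℝ) : ℂ) * Complex.I := by push_cast; ring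
  have h2 : Complex.I * c * (-π : ℝ) = (-(c * π : ℝ) : ℂ) * Complex.I := by push_cast; ring
  rw [h1, h2, Complex.exp_mul_I, Complex.exp_mul_I]
  rw [Complex.cos_neg, Complex.sin_neg]
  push_cast [← Complex.ofReal_sin, ← Complex.ofReal_cos]
  have : (c:ℂ) ≠ 0 := Complex.ofReal_ne_zero.mpr hc
  field_simp
  push_cast; ring

private lemma integral_cos_exp (a : ℝ) (h0 : 0 < a) (h1 : a < 1) (n : ℤ) :
    ∫ x in (-π : ℝ)..π, Complex.exp (-(Complex.I * n * x)) * Complex.cos (a * x) =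
      (((-1 : ℝ) ^ n * Real.sin (a * π) * (1 / (a - n) + 1 / (a + n)) : ℝ) : ℂ) := by
  have han : a - (n : ℝ) ≠ 0 := by
    intro h
    have : (n : ℝ) = a := by linarith
    rcases lt_or_ge n 0 with hn | hn
    · have : (n : ℝ) < 0 := by exact_mod_cast hn
      linarith
    · rcases eq_or_lt_of_le hn with hn' | hn'
      · rw [← hn'] at this; simp at this; linarith
      · have : (1 : ℝ) ≤ (n : ℝ) := by exact_mod_cast hn'
        linarith
  have hap : a + (n : ℝ) ≠ 0 := by
    intro h
    have : (n : ℝ) = -a := by linarith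
    rcases lt_or_ge n 0 with hn | hn
    · have hn1 : n ≤ -1 := by omega
      have h2 : (n : ℝ) ≤ -1 := by exact_mod_cast hn1
      linarith
    · have : (0 : ℝ) ≤ (n : ℝ) := by exact_mod_cast hn
      linarith
  have key : ∀ x : ℝ, Complex.exp (-(Complex.I * n * x)) * Complex.cos (a * x) =
      (Complex.exp (Complex.I * ((a : ℝ) - n) * x) +
        Complex.exp (Complex.I * (-((a : ℝ) + n)) * x)) / 2 := by
    intro x
    have e1 : Complex.I * ((a : ℝ) - n) * x = -(Complex.I * n * x) + ((a * x : ℝ) : ℂ) * Complex.I := by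
      push_cast; ring
    have e2 : Complex.I * (-((a : ℝ) + n)) * x =
        -(Complex.I * n * x) + (-((a * x : ℝ)) : ℂ) * Complex.I := by
      push_cast; ring
    rw [e1, e2, Complex.exp_add, Complex.exp_add, Complex.exp_mul_I, Complex.exp_mul_I,
      Complex.cos_neg, Complex.sin_neg]
    rw [show ((a : ℂ) * x) = ((a * x : ℝ) : ℂ) by push_cast; ring]
    ring
  rw [intervalIntegral.integral_congr (fun x _ => key x)]
  have i1 : IntervalIntegrable (fun x : ℝ => Complex.exp (Complex.I * ((a : ℝ) - n) * x))
      MeasureTheory.volume (-π) π := by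
    apply Continuous.intervalIntegrable; continuity
  have i2 : IntervalIntegrable (fun x : ℝ => Complex.exp (Complex.I * (-((a : ℝ) + n)) * x))
      MeasureTheory.volume (-π) π := by
    apply Continuous.intervalIntegrable; continuity
  rw [intervalIntegral.integral_div, intervalIntegral.integral_add i1 i2]
  have c1 : ((a : ℝ) - n) ≠ 0 := han
  have c2 : (-((a : ℝ) + n)) ≠ 0 := by intro h; apply hap; linarith
  have e1 := int_exp_aux _ c1
  have e2 := int_exp_aux _ c2
  push_cast at e1 e2
  have s1 : Real.sin ((a - n) * π) = (-1 : ℝ) ^ n * Real.sin (a * π) := by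
    rw [show (a - (n:ℝ)) * π = a * π - n * π by ring, Real.sin_sub_int_mul_pi]
  have s2 : Real.sin (-(a + n) * π) = -((-1 : ℝ) ^ n * Real.sin (a * π)) := by
    rw [show (-(a + (n:ℝ))) * π = -(a * π + n * π) by ring, Real.sin_neg,
      Real.sin_add_int_mul_pi]
  rw [e1, e2]
  rw [show ((a:ℂ) - (n:ℂ)) * (π:ℂ) = (((a - (n:ℝ)) * π : ℝ) : ℂ) by push_cast; ring,
    show (-((a:ℂ) + (n:ℂ))) * (π:ℂ) = ((-(a + (n:ℝ)) * π : ℝ) : ℂ) by push_cast; ring,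
    ← Complex.ofReal_sin, ← Complex.ofReal_sin, s1, s2]
  have hc1 : ((a:ℂ) - (n:ℂ)) ≠ 0 := by
    intro h; apply c1; exact_mod_cast h
  have hc2 : ((a:ℂ) + (n:ℂ)) ≠ 0 := by
    intro h; apply hap; exact_mod_cast h
  have hc3 : (-(a:ℂ) - (n:ℂ)) ≠ 0 := by
    intro h; apply hap
    have h' : (a:ℂ) + (n:ℂ) = 0 := by linear_combination -h
    exact_mod_cast h'
  push_cast
  ring_nf
  rw [show (-(a:ℂ) - (n:ℂ))⁻¹ = -(((a:ℂ) + (n:ℂ))⁻¹) by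
    rw [show (-(a:ℂ) - (n:ℂ)) = -((a:ℂ) + (n:ℂ)) from by ring, inv_neg]]
  ring

private lemma aux_ne (a : ℝ) (h0 : 0 < a) (h1 : a < 1) (n : ℤ) :
    a - n ≠ 0 ∧ a + n ≠ 0 := by
  constructor
  · intro h
    have h' : (n : ℝ) = a := by linarith
    rcases lt_or_ge n 0 with hn | hn
    · have : (n : ℝ) < 0 := by exact_mod_cast hn
      linarith
    · rcases eq_or_lt_of_le hn with hn' | hn'
      · rw [← hn'] at h'; simp at h'; linarith
      · have hn1 : 1 ≤ n := hn'
        have : (1 : ℝ) ≤ (n : ℝ) := by exact_mod_cast hn1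
        linarith
  · intro h
    have h' : (n : ℝ) = -a := by linarith
    rcases lt_or_ge n 0 with hn | hn
    · have hn1 : n ≤ -1 := by omega
      have h2 : (n : ℝ) ≤ -1 := by exact_mod_cast hn1
      linarith
    · have : (0 : ℝ) ≤ (n : ℝ) := by exact_mod_cast hn
      linarith

private lemma coeff_eq (a : ℝ) (h0 : 0 < a) (h1 : a ≤ 1/2) (n : ℤ) :
    fourierCoeffOn (by linarith [pi_pos] : (-π:ℝ) < -π + 2*π) (fun t => Complex.cos (a*t)) n =
      ((((-1:ℝ)^n * (Real.sin (a*π) * a / (π * (a^2 - (n:ℝ)^2)))) : ℝ) : ℂ) := by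
  have h1' : a < 1 := by linarith
  obtain ⟨han, hap⟩ := aux_ne a h0 h1' n
  rw [fourierCoeffOn_eq_integral]
  have hb : (-π + 2*π) - (-π) = 2*π := by ring
  have key : ∀ x : ℝ, (fourier (-n) (x : AddCircle ((-π + 2*π) - (-π)))) • Complex.cos (a*x)
      = Complex.exp (-(Complex.I * n * x)) * Complex.cos (a * x) := by
    intro x
    rw [smul_eq_mul, fourier_coe_apply]
    congr 1
    rw [hb]
    push_cast
    have hπ : ((π:ℝ):ℂ) ≠ 0 := Complex.ofReal_ne_zero.mpr pi_ne_zero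
    have h2π : (2*((π:ℝ):ℂ)) ≠ 0 := by
      simpa using hπ
    congr 1
    rw [div_eq_iff h2π]
    ring
  rw [show (-π + 2*π : ℝ) = π by ring] at *
  rw [intervalIntegral.integral_congr (fun x _ => key x), integral_cos_exp a h0 h1' n]
  rw [hb, Complex.real_smul, ← Complex.ofReal_mul]
  congr 1
  have hd : a^2 - (n:ℝ)^2 ≠ 0 := by
    intro h
    have : (a - n) * (a + n) = 0 := by ring_nf; linarith [h]
    rcases mul_eq_zero.mp this with h' | h' <;> [exact han h'; exact hap h']
  field_simp
  ring

private lemma hasSum_cot (a : ℝ) (h0 : 0 < a) (h1 : a ≤ 1/2) :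
    HasSum (fun m : ℕ => 2 * (Real.sin (a*π) * a / (π * (a^2 - ((m:ℝ)+1)^2))))
      (Real.cos (a*π) - Real.sin (a*π) * a / (π * a^2)) := by
  haveI : Fact (0 < 2*π) := ⟨by positivity⟩
  set g : ℤ → ℝ := fun n => Real.sin (a*π) * a / (π * (a^2 - (n:ℝ)^2)) with hg
  set F : ℝ → ℂ := fun t => Complex.cos (a*t) with hFdef
  have hF : F (-π) = F (-π + 2*π) := by
    simp only [hFdef]
    rw [show (-π + 2*π) = π by ring]
    push_cast
    rw [show (a:ℂ) * (-(π:ℝ):ℂ) = -((a:ℂ)*((π:ℝ):ℂ)) by ring, Complex.cos_neg]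
  have hcont : ContinuousOn F (Set.Icc (-π) (-π + 2*π)) := by
    apply Continuous.continuousOn; continuity
  let f : C(AddCircle (2*π), ℂ) :=
    ⟨AddCircle.liftIco (2*π) (-π) F, AddCircle.liftIco_continuous hF hcont⟩
  have hcoeff : ∀ n : ℤ, fourierCoeff (⇑f) n = (((-1:ℝ)^n * g n : ℝ) : ℂ) := by
    intro n
    rw [show (⇑f) = AddCircle.liftIco (2*π) (-π) F from rfl, fourierCoeff_liftIco_eq,
      show (Fact.out : (0:ℝ) < 2*π) = (by linarith [pi_pos] : (0:ℝ) < 2*π) from rfl]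
    exact coeff_eq a h0 h1 n
  -- summability
  have geven : ∀ m : ℕ, g (-(m:ℤ)) = g (m:ℤ) := by
    intro m; simp only [hg]; push_cast; ring_nf
  have habs : Summable (fun m : ℕ => |g ((m:ℤ)+1)|) := by
    have hs : Summable (fun m : ℕ => (|Real.sin (a*π)| * a / π * (4/3)) * (1/((m:ℝ)+1)^2)) := by
      apply Summable.mul_left
      have h2 : Summable (fun m : ℕ => 1/((m:ℝ))^2) := by
        simpa using Real.summable_one_div_nat_pow.mpr (by norm_num : 1 < 2)
      have := (summable_nat_add_iff 1).mpr h2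
      refine this.congr fun m => ?_
      push_cast
      ring
    apply Summable.of_nonneg_of_le (fun m => abs_nonneg _) _ hs
    intro m
    have hm1 : (0:ℝ) < (m:ℝ)+1 := by positivity
    have hden : a^2 - (((m:ℤ)+1:ℤ):ℝ)^2 < 0 := by
      push_cast
      nlinarith
    have hden2 : (3/4) * ((m:ℝ)+1)^2 ≤ ((m:ℝ)+1)^2 - a^2 := by
      nlinarith
    have hQ : (3/4) * ((m:ℝ)+1)^2 ≤ ((m:ℝ)+1)^2 - a^2 := hden2
    have step : |g ((m:ℤ)+1)| = (|Real.sin (a*π)| * a) / (π * (((m:ℝ)+1)^2 - a^2)) := by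
      rw [hg]
      simp only
      rw [show (((m:ℤ)+1 : ℤ) : ℝ) = (m:ℝ)+1 by push_cast; ring]
      rw [abs_div, abs_mul, abs_of_nonneg h0.le, abs_mul, abs_of_pos pi_pos,
        abs_of_neg (by nlinarith : a^2 - ((m:ℝ)+1)^2 < 0),
        show -(a^2 - ((m:ℝ)+1)^2) = ((m:ℝ)+1)^2 - a^2 by ring]
    rw [step]
    calc (|Real.sin (a*π)| * a) / (π * (((m:ℝ)+1)^2 - a^2))
        ≤ (|Real.sin (a*π)| * a) / (π * ((3/4) * ((m:ℝ)+1)^2)) := by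
          apply div_le_div_of_nonneg_left (by positivity) (by positivity)
          nlinarith [pi_pos]
      _ = |Real.sin (a*π)| * a / π * (4/3) * (1/((m:ℝ)+1)^2) := by
          rw [div_eq_iff (by positivity : π * ((3/4) * ((m:ℝ)+1)^2) ≠ 0)]
          field_simp
  have hsummZ : Summable (fun n : ℤ => |g n|) := by
    apply Summable.of_nat_of_neg
    · rw [← summable_nat_add_iff 1]
      refine habs.congr fun m => ?_
      norm_cast
    · rw [← summable_nat_add_iff 1]
      refine habs.congr fun m => ?_
      rw [geven (m+1)]
      norm_cast
  have hsumc : Summable (fourierCoeff (⇑f)) := by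
    apply Summable.of_norm
    refine hsummZ.congr fun n => ?_
    have habs1 : |(-1:ℝ)^n| = 1 := by
      rcases Int.even_or_odd n with h | h
      · rw [h.neg_one_zpow, abs_one]
      · rw [h.neg_one_zpow, abs_neg, abs_one]
    rw [hcoeff n, Complex.norm_real, Real.norm_eq_abs, abs_mul, habs1, one_mul]
  have hpt := has_pointwise_sum_fourier_series_of_summable hsumc ((π : ℝ) : AddCircle (2*π))
  have hfval : f ((π : ℝ) : AddCircle (2*π)) = ((Real.cos (a*π) : ℝ) : ℂ) := by
    have hpteq : ((π:ℝ) : AddCircle (2*π)) = ((-π : ℝ) : AddCircle (2*π)) := by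
      have hcp := AddCircle.coe_add_period (2*π) (-π)
      rw [show (-π + 2*π : ℝ) = π from by ring] at hcp
      exact hcp
    rw [show f ((π : ℝ) : AddCircle (2*π))
        = AddCircle.liftIco (2*π) (-π) F (((π:ℝ) : AddCircle (2*π))) from rfl, hpteq,
      AddCircle.liftIco_coe_apply (by constructor <;> [linarith [pi_pos]; linarith [pi_pos]])]
    simp only [hFdef]
    rw [show (a:ℂ) * ((-π : ℝ):ℂ) = -(((a*π : ℝ):ℂ)) by push_cast; ring, Complex.cos_neg,
      ← Complex.ofReal_cos]
  have hfour : ∀ n : ℤ, fourier n ((π : ℝ) : AddCircle (2*π)) = (-1:ℂ)^n := by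
    intro n
    rw [fourier_coe_apply]
    rw [show 2*((π:ℝ):ℂ)*Complex.I*(n:ℂ)*((π:ℝ):ℂ)/(((2*π : ℝ)):ℂ)
        = (n:ℂ) * (((π:ℝ):ℂ)*Complex.I) from by
      rw [div_eq_iff (by push_cast; simp [pi_ne_zero] : (((2*π : ℝ)):ℂ) ≠ 0)]
      push_cast
      ring]
    rw [Complex.exp_int_mul, Complex.exp_pi_mul_I]
  have hterm : (fun n : ℤ => fourierCoeff (⇑f) n • fourier n ((π : ℝ) : AddCircle (2*π)))
      = fun n : ℤ => ((g n : ℝ) : ℂ) := by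
    funext n
    rw [hcoeff n, hfour n, smul_eq_mul]
    rw [Complex.ofReal_mul]
    have hpow : ((((-1:ℝ)^n : ℝ)) : ℂ) = (-1:ℂ)^n := by
      push_cast
      ring
    rw [hpow, mul_comm, ← mul_assoc, ← zpow_add₀ (by norm_num : (-1:ℂ) ≠ 0)]
    rw [show n + n = 2*n by ring, zpow_mul]
    norm_num
  rw [hterm, hfval] at hpt
  have hR : HasSum (fun n : ℤ => g n) (Real.cos (a*π)) := by
    have h' := ((Complex.hasSum_iff _ _).mp hpt).1
    simp only [Complex.ofReal_re] at h'
    exact h'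
  have hN := hR.nat_add_neg
  have hN2 : HasSum (fun m : ℕ => 2 * g (m : ℤ)) (Real.cos (a*π) + g 0) := by
    have hfe : (fun m : ℕ => g (m:ℤ) + g (-(m:ℤ))) = fun m : ℕ => 2 * g (m:ℤ) :=
      funext fun m => by rw [geven m]; ring
    rwa [hfe] at hN
  have h3 : HasSum (fun m : ℕ => 2 * g (((m+1:ℕ)) : ℤ)) (Real.cos (a*π) - g 0) := by
    refine (hasSum_nat_add_iff (f := fun m : ℕ => 2 * g (m:ℤ)) 1).mpr ?_
    rw [Finset.sum_range_one]
    simp only [Nat.cast_zero]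
    rw [show Real.cos (a*π) - g 0 + 2 * g 0 = Real.cos (a*π) + g 0 from by ring]
    exact hN2
  have hg0 : g 0 = Real.sin (a*π) * a / (π * a^2) := by
    simp [hg]
  rw [hg0] at h3
  refine h3.congr fun m => ?_
  rw [hg]
  simp only
  congr 2
  push_cast
  ring

/-- For every integer `k ≥ 3`, `π = k·tan(π/k)·(1 − 2·S_k)` where
`S_k = ∑_{n=1}^∞ 1/((k·n)² − 1)`. -/
theorem pi_eq_tan_mul (k : ℕ) (hk : 3 ≤ k) :
    Real.pi =
      (k : ℝ) * Real.tan (Real.pi / k) *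
        (1 - 2 * ∑' n : ℕ, 1 / (((k : ℝ) * (n + 1)) ^ 2 - 1)) := by
  have hk0 : (0:ℝ) < k := by
    have : (3:ℝ) ≤ k := by exact_mod_cast hk
    linarith
  have hk3 : (3:ℝ) ≤ k := by exact_mod_cast hk
  set a : ℝ := 1/k with ha
  have h0 : 0 < a := by positivity
  have h1 : a ≤ 1/2 := by
    rw [ha, div_le_div_iff₀ hk0 (by norm_num)]
    linarith
  have H := hasSum_cot a h0 h1
  have haπ : a * π = π / k := by rw [ha]; ring
  have hsin : 0 < Real.sin (a*π) := by
    apply Real.sin_pos_of_pos_of_lt_pi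
    · rw [haπ]; positivity
    · rw [haπ, div_lt_iff₀ hk0]
      nlinarith [pi_pos]
  have hcos : 0 < Real.cos (a*π) := by
    apply Real.cos_pos_of_mem_Ioo
    constructor
    · rw [haπ]
      have : 0 < π / k := by positivity
      nlinarith [pi_pos]
    · rw [haπ, div_lt_iff₀ hk0]
      nlinarith [pi_pos]
  set s := Real.sin (a*π) with hs
  set c := Real.cos (a*π) with hcdef
  have hc : HasSum (fun m : ℕ => (-(2*(k:ℝ)*s/π)) * (1/(((k:ℝ)*((m:ℝ)+1))^2 - 1)))
      (c - (k:ℝ)*s/π) := by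
    have hterm : ∀ m : ℕ, (-(2*(k:ℝ)*s/π)) * (1/(((k:ℝ)*((m:ℝ)+1))^2 - 1))
        = 2 * (s * a / (π * (a^2 - ((m:ℝ)+1)^2))) := by
      intro m
      have hm1 : (3:ℝ) ≤ (k:ℝ)*((m:ℝ)+1) := by
        have hm0 : (0:ℝ) ≤ (m:ℝ) := Nat.cast_nonneg m
        nlinarith
      have hd1 : ((k:ℝ)*((m:ℝ)+1))^2 - 1 ≠ 0 := by nlinarith
      have h1' : a < 1 := by
        rw [ha, div_lt_one hk0]; linarith
      have hd3 : a^2 - ((m:ℝ)+1)^2 ≠ 0 := by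
        refine ne_of_lt ?_
        have hmm : (1:ℝ) ≤ ((m:ℝ)+1)^2 := by nlinarith [sq_nonneg (m:ℝ)]
        nlinarith
      have e1 : a^2 - ((m:ℝ)+1)^2 = -(((k:ℝ)*((m:ℝ)+1))^2 - 1)/(k:ℝ)^2 := by
        rw [ha]
        field_simp
        ring
      have hπD : π * (((k:ℝ)*((m:ℝ)+1))^2 - 1) ≠ 0 := mul_ne_zero pi_ne_zero hd1
      have hπd3 : π * (a^2 - ((m:ℝ)+1)^2) ≠ 0 := mul_ne_zero pi_ne_zero hd3
      rw [show (-(2*(k:ℝ)*s/π)) = (-(2*(k:ℝ)*s))/π from by ring,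
        div_mul_div_comm, mul_one]
      rw [show 2 * (s * a / (π * (a^2 - ((m:ℝ)+1)^2)))
          = (2*(s*a))/(π * (a^2 - ((m:ℝ)+1)^2)) from by ring]
      rw [div_eq_div_iff hπD hπd3, e1, ha]
      field_simp
    have hval : c - (k:ℝ)*s/π = c - s * a / (π * a^2) := by
      rw [ha]
      field_simp
    have hfe : (fun m : ℕ => (-(2*(k:ℝ)*s/π)) * (1/(((k:ℝ)*((m:ℝ)+1))^2 - 1)))
        = fun m : ℕ => 2 * (s * a / (π * (a^2 - ((m:ℝ)+1)^2))) := funext hterm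
    rw [hval, hfe]
    exact H
  have hcne : (-(2*(k:ℝ)*s/π)) ≠ 0 := by
    refine neg_ne_zero.mpr ?_
    have : 0 < 2*(k:ℝ)*s/π := div_pos (by nlinarith) pi_pos
    linarith
  have hu := hc.mul_left (-(2*(k:ℝ)*s/π))⁻¹
  have hfe2 : (fun m : ℕ => (-(2*(k:ℝ)*s/π))⁻¹ *
        ((-(2*(k:ℝ)*s/π)) * (1/(((k:ℝ)*((m:ℝ)+1))^2 - 1))))
      = fun m : ℕ => 1/(((k:ℝ)*((m:ℝ)+1))^2 - 1) :=
    funext fun m => inv_mul_cancel_left₀ hcne _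
  rw [hfe2] at hu
  rw [hu.tsum_eq]
  rw [Real.tan_eq_sin_div_cos, show π/(k:ℝ) = a*π from haπ.symm, ← hs, ← hcdef]
  have hS : (-(2*(k:ℝ)*s/π))⁻¹ * (c - (k:ℝ)*s/π) = 1/2 - π*c/(2*(k:ℝ)*s) := by
    field_simp
    ring
  rw [hS]
  field_simp
  ring
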